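/- Let D be a finite distributive lattice. The set Q of join-preserving maps f : D → D satisfying f(f(a)) = f(a) ≤ a for all a, ordered pointwise, is order-isomorphic to the powerset of J(D) ordered by inclusion, via f ↦ {p ∈ J(D) : f(p) = p} with inverse T ↦ f_T where f_T(a) = ⋁{p ∈ J(D) : p ∈ T, p ≤ a}. -/
import Mathlib

open Finset
open scoped Classical

namespace Stmt10Aux

variable {D : Type*} [DistribLattice D] [BoundedOrder D] [Fintype D]

private abbrev JD (D : Type*) [DistribLattice D] [BoundedOrder D] :=
  {p : D // p ≠ ⊥ ∧ ∀ b c : D, p ≤ b ⊔ c → p ≤ b ∨ p ≤ c}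

private lemma prime_of (p : JD D) : SupPrime p.1 :=
  ⟨fun h => p.2.1 h.eq_bot, fun _ _ h => p.2.2 _ _ h⟩

noncomputable def Psi (T : Set (JD D)) (a : D) : D :=
  (Finset.univ.filter (fun p : JD D => p ∈ T ∧ p.1 ≤ a)).sup Subtype.val

private lemma le_psi {T : Set (JD D)} {a : D} {p : JD D} (hT : p ∈ T) (ha : p.1 ≤ a) :
    p.1 ≤ Psi T a :=
  Finset.le_sup (Finset.mem_filter.2 ⟨Finset.mem_univ _, hT, ha⟩)

private lemma psi_le {T : Set (JD D)} {a b : D}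
    (h : ∀ p : JD D, p ∈ T → p.1 ≤ a → p.1 ≤ b) : Psi T a ≤ b :=
  Finset.sup_le fun q hq => h q (Finset.mem_filter.1 hq).2.1 (Finset.mem_filter.1 hq).2.2

private lemma psi_isLUB (T : Set (JD D)) (a : D) :
    IsLUB {x : D | ∃ p, p ∈ T ∧ p.1 ≤ a ∧ x = p.1} (Psi T a) := by
  constructor
  · rintro x ⟨p, hpT, hpa, rfl⟩
    exact le_psi hpT hpa
  · intro b hb
    exact psi_le fun p hpT hpa => hb ⟨p, hpT, hpa, rfl⟩

private lemma psi_defl (T : Set (JD D)) (a : D) : Psi T a ≤ a :=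
  psi_le fun _ _ h => h

private lemma psi_mono (T : Set (JD D)) {a b : D} (h : a ≤ b) : Psi T a ≤ Psi T b :=
  psi_le fun p hpT hpa => le_psi hpT (hpa.trans h)

private lemma psi_sup (T : Set (JD D)) (a b : D) : Psi T (a ⊔ b) = Psi T a ⊔ Psi T b := by
  refine le_antisymm (psi_le fun p hpT hp => ?_)
    (sup_le (psi_mono T le_sup_left) (psi_mono T le_sup_right))
  rcases p.2.2 a b hp with h | h
  · exact (le_psi hpT h).trans le_sup_left
  · exact (le_psi hpT h).trans le_sup_right

private lemma psi_bot (T : Set (JD D)) : Psi T ⊥ = ⊥ :=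
  le_bot_iff.1 (psi_defl T ⊥)

private lemma psi_idem (T : Set (JD D)) (a : D) : Psi T (Psi T a) = Psi T a :=
  le_antisymm (psi_defl T _) (psi_le fun p hpT hpa => le_psi hpT (le_psi hpT hpa))

private lemma psi_fix_set (T : Set (JD D)) : {p : JD D | Psi T p.1 = p.1} = T := by
  ext p
  constructor
  · intro h
    have hp : p.1 ≤ (Finset.univ.filter (fun q : JD D => q ∈ T ∧ q.1 ≤ p.1)).sup Subtype.val :=
      h.ge
    obtain ⟨q, hq, hpq⟩ := ((prime_of p).le_finset_sup).1 hp
    obtain ⟨-, hqT, hqp⟩ := Finset.mem_filter.1 hq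
    have : q = p := Subtype.ext (le_antisymm hqp hpq)
    exact this ▸ hqT
  · intro h
    exact le_antisymm (psi_defl T _) (le_psi h le_rfl)

private lemma fixed_le_psi (f : D → D) (hsup : ∀ a b, f (a ⊔ b) = f a ⊔ f b)
    (hbot : f ⊥ = ⊥) (hidem : ∀ a, f (f a) = f a) (hdefl : ∀ a, f a ≤ a) :
    ∀ b, f b = b → b ≤ Psi {p : JD D | f p.1 = p.1} b := by
  have hfin : ∀ s : Finset D, f (s.sup id) = s.sup f := by
    intro s
    induction s using Finset.cons_induction with
    | empty => simpa using hbot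
    | cons a s ha ih => simp [Finset.sup_cons, hsup, ih]
  intro b
  induction b using WellFoundedLT.induction with
  | _ b ih =>
    intro hb
    obtain ⟨s, hs, hP⟩ := exists_supIrred_decomposition b
    have hbs : b = s.sup f := by rw [← hb, ← hs, hfin]
    refine hbs.trans_le (Finset.sup_le fun q hq => ?_)
    have hqb : q ≤ b := hs ▸ Finset.le_sup (f := id) hq
    by_cases hfq : f q = q
    · have hq' : SupPrime q := supPrime_iff_supIrred.2 (hP hq)
      have hmem : (⟨q, hq'.ne_bot, fun b c h => hq'.2 h⟩ : JD D) ∈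
          {p : JD D | f p.1 = p.1} := hfq
      have h2 : q ≤ Psi {p : JD D | f p.1 = p.1} b := le_psi hmem hqb
      exact hfq.le.trans h2
    · have hlt : f q < q := lt_of_le_of_ne (hdefl q) hfq
      have hcb : f q ≤ b := (hdefl q).trans hqb
      have hne : f q ≠ b := by
        intro h'
        have hqb' : q = b := le_antisymm hqb (h' ▸ hdefl q)
        exact hfq ((h'.trans hqb'.symm))
      have := ih (f q) (lt_of_le_of_ne hcb hne) (hidem q)
      exact this.trans (psi_mono _ hcb)

private lemma psi_eq (f : D → D) (hsup : ∀ a b, f (a ⊔ b) = f a ⊔ f b)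
    (hbot : f ⊥ = ⊥) (hidem : ∀ a, f (f a) = f a) (hdefl : ∀ a, f a ≤ a) (a : D) :
    Psi {p : JD D | f p.1 = p.1} a = f a := by
  have hmono : ∀ {x y : D}, x ≤ y → f x ≤ f y := by
    intro x y h
    have : f x ⊔ f y = f y := by rw [← hsup, sup_eq_right.2 h]
    exact sup_eq_right.1 this
  refine le_antisymm (psi_le fun p hpT hpa => ?_) ?_
  · calc p.1 = f p.1 := hpT.symm
      _ ≤ f a := hmono hpa
  · exact (fixed_le_psi f hsup hbot hidem hdefl (f a) (hidem a)).trans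
      (psi_mono _ (hdefl a))

noncomputable def theIso :
    {f : D → D // (∀ a b, f (a ⊔ b) = f a ⊔ f b) ∧ f ⊥ = ⊥ ∧
      (∀ a, f (f a) = f a) ∧ (∀ a, f a ≤ a)} ≃o Set (JD D) where
  toFun f := {p : JD D | f.1 p.1 = p.1}
  invFun T := ⟨Psi T, psi_sup T, psi_bot T, psi_idem T, psi_defl T⟩
  left_inv f := by
    obtain ⟨f, hsup, hbot, hidem, hdefl⟩ := f
    exact Subtype.ext (funext fun a => psi_eq f hsup hbot hidem hdefl a)
  right_inv T := psi_fix_set T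
  map_rel_iff' := by
    rintro ⟨f, hfsup, hfbot, hfidem, hfdefl⟩ ⟨g, hgsup, hgbot, hgidem, hgdefl⟩
    constructor
    · intro h
      have hmono : ∀ {x y : D}, x ≤ y → g x ≤ g y := by
        intro x y hxy
        have : g x ⊔ g y = g y := by rw [← hgsup, sup_eq_right.2 hxy]
        exact sup_eq_right.1 this
      refine Subtype.mk_le_mk.2 fun a => ?_
      rw [← psi_eq f hfsup hfbot hfidem hfdefl a]
      refine psi_le fun p hpT hpa => ?_
      have hgp : g p.1 = p.1 := h hpT
      calc p.1 = g p.1 := hgp.symm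
        _ ≤ g a := hmono hpa
    · intro h p hp
      have h1 : f p.1 ≤ g p.1 := h p.1
      have hp' : f p.1 = p.1 := hp
      have h3 : p.1 ≤ g p.1 := hp'.symm.trans_le h1
      show g p.1 = p.1
      exact le_antisymm (hgdefl p.1) h3

end Stmt10Aux

theorem stmt_10 {D : Type*} [DistribLattice D] [BoundedOrder D] [Fintype D] :
    ∃ e : {f : D → D // (∀ a b, f (a ⊔ b) = f a ⊔ f b) ∧ f ⊥ = ⊥ ∧
            (∀ a, f (f a) = f a) ∧ (∀ a, f a ≤ a)} ≃o
          Set {p : D // p ≠ ⊥ ∧ ∀ b c : D, p ≤ b ⊔ c → p ≤ b ∨ p ≤ c},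
      (∀ f, e f = {p | f.1 p.1 = p.1}) ∧
      (∀ (T : Set {p : D // p ≠ ⊥ ∧ ∀ b c : D, p ≤ b ⊔ c → p ≤ b ∨ p ≤ c}) (a : D),
        IsLUB {x : D | ∃ p, p ∈ T ∧ p.1 ≤ a ∧ x = p.1} ((e.symm T).1 a)) := by
  exact ⟨Stmt10Aux.theIso, fun f => rfl, fun T a => Stmt10Aux.psi_isLUB T a⟩
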